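/- Let (S,·) be a commutative semigroup and let A ⊆ S be a J-set. Then for every finite nonempty set F of sequences f : ℕ → S, the collection {H ∈ P_f(ℕ) : there exists a ∈ S such that a·∏_{t∈H} f(t) ∈ A for all f ∈ F} is a č-ip* set in the partial semigroup (P_f(ℕ),⊎). -/

import Mathlib

/-- The product `∏_{t ∈ H} f t` over a nonempty finite set `H ⊆ ℕ` in a semigroup,
computed in increasing order of the indices (in a commutative semigroup the order
is immaterial). -/
def semigroupProd {S : Type*} [Semigroup S] (f : ℕ → S) (H : Finset ℕ) (hH : H.Nonempty) : S :=
  ((H.sort (· ≤ ·)).tail).foldl (fun x t => x * f t) (f (H.min' hH))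

/-- A set `A` in a commutative semigroup `S` is a J-set if for every finite nonempty set
`F` of sequences in `S` there are `a ∈ S` and a finite nonempty `H ⊆ ℕ` such that
`a * ∏_{t ∈ H} f t ∈ A` for every `f ∈ F`. -/
def IsJSet {S : Type*} [CommSemigroup S] (A : Set S) : Prop :=
  ∀ F : Finset (ℕ → S), F.Nonempty →
    ∃ a : S, ∃ H : Finset ℕ, ∃ hH : H.Nonempty,
      ∀ f ∈ F, a * semigroupProd f H hH ∈ A

/-- A subset `𝒜` of `P_f(ℕ)` (the nonempty finite subsets of `ℕ`) is a č-ip set if there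
is a sequence `⟨H_n⟩` of nonempty finite subsets of `ℕ` with `max H_n < min H_{n+1}` for
all `n` such that all finite unions `⋃_{n ∈ G} H_n` (for `G` finite nonempty) lie in `𝒜`. -/
def IsCIP (𝒜 : Set (Finset ℕ)) : Prop :=
  ∃ H : ℕ → Finset ℕ, (∀ n, (H n).Nonempty) ∧
    (∀ n, ∀ a ∈ H n, ∀ b ∈ H (n + 1), a < b) ∧
    ∀ G : Finset ℕ, G.Nonempty → G.biUnion H ∈ 𝒜

/-- A subset of `P_f(ℕ)` is č-ip* if it meets every č-ip set. -/
def IsCIPStar (𝒜 : Set (Finset ℕ)) : Prop :=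
  ∀ ℬ : Set (Finset ℕ), IsCIP ℬ → (𝒜 ∩ ℬ).Nonempty

private lemma foldl_coe {S : Type*} [Semigroup S] (f : ℕ → S) :
    ∀ (l : List ℕ) (b : S),
      (WithOne.coe (l.foldl (fun x t => x * f t) b)
        = WithOne.coe b * (l.map (fun t => WithOne.coe (f t))).prod)
  | [], b => by simp
  | t :: l, b => by
    simp only [List.foldl_cons, List.map_cons, List.prod_cons]
    rw [foldl_coe f l (b * f t), WithOne.coe_mul, mul_assoc]

lemma coe_semigroupProd {S : Type*} [CommSemigroup S] (f : ℕ → S) (H : Finset ℕ)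
    (hH : H.Nonempty) :
    WithOne.coe (semigroupProd f H hH) = ∏ t ∈ H, WithOne.coe (f t) := by
  set l := H.sort (· ≤ ·) with hl
  have hlen : 0 < l.length := by
    rw [hl, Finset.length_sort]; exact hH.card_pos
  have hne : l ≠ [] := List.length_pos_iff.mp hlen
  have hhead : l.get ⟨0, hlen⟩ = H.min' hH := Finset.sorted_zero_eq_min'
  have hcons : l = H.min' hH :: l.tail := by
    conv_lhs => rw [← List.cons_head_tail hne]
    rw [← hhead]
    congr 1
    rw [List.head_eq_getElem, List.get_eq_getElem]
  have : WithOne.coe (semigroupProd f H hH)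
      = (l.map (fun t => WithOne.coe (f t))).prod := by
    rw [semigroupProd, foldl_coe]
    conv_rhs => rw [hcons]
    simp
    rfl
  rw [this]
  rw [← Multiset.prod_coe, ← Multiset.map_coe, hl, Finset.sort_eq]
  rfl

private lemma blocks_lt (H : ℕ → Finset ℕ) (hne : ∀ n, (H n).Nonempty)
    (hinc : ∀ n, ∀ a ∈ H n, ∀ b ∈ H (n + 1), a < b) :
    ∀ m n, m < n → ∀ a ∈ H m, ∀ b ∈ H n, a < b := by
  intro m n
  induction n with
  | zero => omega
  | succ k ih =>
    intro hmn a ha b hb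
    rcases Nat.lt_succ_iff_lt_or_eq.mp hmn with h | h
    · obtain ⟨c, hc⟩ := hne k
      exact (ih h a ha c hc).trans (hinc k c hc b hb)
    · subst h; exact hinc m a ha b hb

theorem jset_cipStar {S : Type*} [CommSemigroup S] {A : Set S} (hA : IsJSet A)
    (F : Finset (ℕ → S)) (hF : F.Nonempty) :
    IsCIPStar {H : Finset ℕ |
      ∃ hH : H.Nonempty, ∃ a : S, ∀ f ∈ F, a * semigroupProd f H hH ∈ A} := by
  classical
  rintro ℬ ⟨H, hne, hinc, hmem⟩
  set g : (ℕ → S) → ℕ → S := fun f n => semigroupProd f (H n) (hne n) with hg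
  obtain ⟨a, G, hG, ha⟩ := hA (F.image g) (hF.image g)
  have hdisj : Set.PairwiseDisjoint (↑G : Set ℕ) H := by
    intro m _ n _ hmn
    rcases Nat.lt_or_ge m n with h | h
    · exact Finset.disjoint_left.mpr fun x hx hx' =>
        lt_irrefl x (blocks_lt H hne hinc m n h x hx x hx')
    · have h' : n < m := lt_of_le_of_ne h (Ne.symm hmn)
      exact Finset.disjoint_right.mpr fun x hx hx' =>
        lt_irrefl x (blocks_lt H hne hinc n m h' x hx x hx')
  have hBne : (G.biUnion H).Nonempty := by
    obtain ⟨n, hn⟩ := hG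
    obtain ⟨x, hx⟩ := hne n
    exact ⟨x, Finset.mem_biUnion.mpr ⟨n, hn, hx⟩⟩
  refine ⟨G.biUnion H, ⟨hBne, a, fun f hf => ?_⟩, hmem G hG⟩
  have key : semigroupProd f (G.biUnion H) hBne = semigroupProd (g f) G hG := by
    have hinj : Function.Injective (WithOne.coe (α := S)) :=
      fun x y h => WithOne.coe_inj.mp h
    apply hinj
    rw [coe_semigroupProd, coe_semigroupProd, Finset.prod_biUnion hdisj]
    exact Finset.prod_congr rfl fun n _ => (coe_semigroupProd f (H n) (hne n)).symm
  rw [key]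
  exact ha (g f) (Finset.mem_image_of_mem g hf)
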